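/- arXiv:1401.0597 — 3 statements merged into one kernel-verified Lean document; each statement's English description precedes it below -/
import Mathlib

section
/- For distinct indices i ≠ j and every positive even integer q, ∫_{S²} (x^i)² (x^j)^q dμ = 4π / ((q+3)(q+1)). -/
open MeasureTheory RealInnerProductSpace

noncomputable section

/-- Euclidean 3-space. -/
abbrev E3 := EuclideanSpace ℝ (Fin 3)

/-- The unit sphere `S²` in `ℝ³`. -/
abbrev S2 := Metric.sphere (0 : E3) 1

/-- The surface (area) measure on the unit sphere, normalized so that
the total area is `4π`. -/
abbrev sphereMeasure : Measure S2 := (volume : Measure E3).toSphere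

/-- The restriction of the `i`-th Cartesian coordinate function to the sphere. -/
def coordFn (i : Fin 3) (p : S2) : ℝ := (p : E3) i

/-- The `i`-th standard basis vector of `ℝ³`. -/
def e3 (i : Fin 3) : E3 := EuclideanSpace.single i (1 : ℝ)

open scoped Classical in
/-- The degree-zero homogeneous extension of a function on the unit sphere to `ℝ³`. -/
def homExt (A : S2 → ℝ) : E3 → ℝ := fun x =>
  if hx : ‖x‖⁻¹ • x ∈ S2 then A ⟨‖x‖⁻¹ • x, hx⟩ else 0

/-- The Euclidean Laplacian of a function on `ℝ³`. -/
def eLap (f : E3 → ℝ) (x : E3) : ℝ :=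
  ∑ i : Fin 3, iteratedFDeriv ℝ 2 f x ![e3 i, e3 i]

/-- The Laplace–Beltrami operator of the round metric on the unit sphere,
computed as the Euclidean Laplacian of the degree-zero homogeneous extension. -/
def sphereLap (A : S2 → ℝ) (p : S2) : ℝ := eLap (homExt A) (p : E3)

/-- The (round) gradient of a function on the unit sphere, viewed as a vector in `ℝ³`
tangent to the sphere: the Euclidean gradient of the degree-zero homogeneous extension. -/
def sphereGrad (A : S2 → ℝ) (p : S2) : E3 := gradient (homExt A) (p : E3)


open Real Set

lemma gauss_moment (m : ℕ) (hm : Even m) :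
    ∫ t : ℝ, t ^ m * Real.exp (-t ^ 2) = Real.Gamma (((m : ℝ) + 1) / 2) := by
  have h1 : (fun t : ℝ => t ^ m * Real.exp (-t ^ 2))
      = fun t : ℝ => |t| ^ m * Real.exp (-|t| ^ 2) := by
    funext t; rw [hm.pow_abs, sq_abs]
  rw [h1, integral_comp_abs (f := fun s : ℝ => s ^ m * Real.exp (-s ^ 2))]
  have h2 : ∫ x in Ioi (0:ℝ), x ^ m * Real.exp (-x ^ 2)
      = ∫ x in Ioi (0:ℝ), x ^ (m : ℝ) * Real.exp (-x ^ (2:ℝ)) := by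
    refine setIntegral_congr_fun measurableSet_Ioi (fun x hx => ?_)
    rw [Real.rpow_natCast, show (2:ℝ) = ((2:ℕ):ℝ) by norm_num, Real.rpow_natCast]
  rw [h2, integral_rpow_mul_exp_neg_rpow (by norm_num)
    (neg_one_lt_zero.trans_le (Nat.cast_nonneg _))]
  ring

lemma radial_int (d : ℕ) :
    ∫ r in Ioi (0:ℝ), r ^ d * Real.exp (-r ^ 2) = (1/2) * Real.Gamma (((d:ℝ) + 1) / 2) := by
  have h2 : ∫ x in Ioi (0:ℝ), x ^ d * Real.exp (-x ^ 2)
      = ∫ x in Ioi (0:ℝ), x ^ (d : ℝ) * Real.exp (-x ^ (2:ℝ)) := by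
    refine setIntegral_congr_fun measurableSet_Ioi (fun x hx => ?_)
    rw [Real.rpow_natCast, show (2:ℝ) = ((2:ℕ):ℝ) by norm_num, Real.rpow_natCast]
  rw [h2, integral_rpow_mul_exp_neg_rpow (by norm_num)
    (neg_one_lt_zero.trans_le (Nat.cast_nonneg _))]

lemma integral_volumeIoiPow (n : ℕ) (g : ℝ → ℝ) :
    ∫ r : Ioi (0:ℝ), g r ∂(Measure.volumeIoiPow n) = ∫ r in Ioi (0:ℝ), r ^ n * g r := by
  rw [Measure.volumeIoiPow]
  simp only [ENNReal.ofReal]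
  rw [integral_withDensity_eq_integral_smul
      ((measurable_subtype_coe.pow_const _).real_toNNReal) (fun r : Ioi (0:ℝ) => g r),
    integral_subtype_comap measurableSet_Ioi (fun a : ℝ => Real.toNNReal (a ^ n) • g a)]
  refine setIntegral_congr_fun measurableSet_Ioi (fun x hx => ?_)
  rw [NNReal.smul_def, Real.coe_toNNReal _ (pow_nonneg hx.out.le _), smul_eq_mul]

lemma polar_decomp (g : S2 × Ioi (0:ℝ) → ℝ) (F : E3 → ℝ)
    (hF : ∀ x : ({0}ᶜ : Set E3), F x = g (homeomorphUnitSphereProd E3 x)) :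
    ∫ x : E3, F x
      = ∫ p, g p ∂(((volume : Measure E3).toSphere).prod (Measure.volumeIoiPow 2)) := by
  have h3 : Module.finrank ℝ E3 - 1 = 2 := by rw [finrank_euclideanSpace_fin]
  have key := ((volume : Measure E3).measurePreserving_homeomorphUnitSphereProd).integral_comp
      (Homeomorph.measurableEmbedding _) g
  rw [h3] at key
  calc ∫ x : E3, F x = ∫ x : ({0}ᶜ : Set E3), F x ∂((volume : Measure E3).comap Subtype.val) := by
        rw [integral_subtype_comap (measurableSet_singleton (0:E3)).compl F,
          restrict_compl_singleton]
    _ = ∫ x : ({0}ᶜ : Set E3), g (homeomorphUnitSphereProd E3 x)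
          ∂((volume : Measure E3).comap Subtype.val) :=
        integral_congr_ae (Filter.Eventually.of_forall hF)
    _ = _ := key

lemma fin3_mk2 : (⟨2, by omega⟩ : Fin 3) = 2 := rfl

lemma prod_gamma_e (i j : Fin 3) (hij : i ≠ j) (q : ℕ) :
    ∏ k, Real.Gamma ((((if k = i then 2 else if k = j then q else 0 : ℕ) : ℝ) + 1) / 2)
      = Real.Gamma (3/2) * Real.Gamma (((q:ℝ)+1)/2) * Real.Gamma (1/2) := by
  fin_cases i <;> fin_cases j <;>
    first
      | exact absurd rfl hij
      | (simp only [Fin.prod_univ_three, fin3_mk2, Fin.mk_zero, Fin.mk_one]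
         norm_num [Fin.ext_iff] <;> ring_nf <;> exact Or.inl trivial)

lemma prod_pow_e (i j : Fin 3) (hij : i ≠ j) (q : ℕ) (y : Fin 3 → ℝ) :
    ∏ k, (y k) ^ (if k = i then 2 else if k = j then q else 0) = (y i) ^ 2 * (y j) ^ q := by
  fin_cases i <;> fin_cases j <;>
    first
      | exact absurd rfl hij
      | (simp only [Fin.prod_univ_three, fin3_mk2, Fin.mk_zero, Fin.mk_one]
         norm_num [Fin.ext_iff] <;> ring_nf <;> exact Or.inl trivial)


/-- For `i ≠ j` and positive even `q`, `∫_{S²} (xⁱ)² (xʲ)^q dμ = 4π/((q+3)(q+1))`. -/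
theorem sphere_integral_sq_pow (i j : Fin 3) (hij : i ≠ j) (q : ℕ)
    (hq : 0 < q) (heq : Even q) :
    ∫ z : S2, (coordFn i z) ^ 2 * (coordFn j z) ^ q ∂sphereMeasure
      = 4 * Real.pi / (((q : ℝ) + 3) * ((q : ℝ) + 1)) := by
  set F : E3 → ℝ := fun x => (x i) ^ 2 * (x j) ^ q * Real.exp (-‖x‖ ^ 2) with hFdef
  set I : ℝ := ∫ z : S2, (coordFn i z) ^ 2 * (coordFn j z) ^ q ∂sphereMeasure with hI
  -- polar side
  have hpolar : ∫ x : E3, F x = I * ((1/2) * Real.Gamma (((q:ℝ)+5)/2)) := by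
    rw [polar_decomp (fun p => ((coordFn i p.1) ^ 2 * (coordFn j p.1) ^ q)
        * ((p.2:ℝ) ^ (q+2) * Real.exp (-(p.2:ℝ) ^ 2))) F ?_]
    · rw [integral_prod_mul (f := fun z : S2 => (coordFn i z) ^ 2 * (coordFn j z) ^ q)
        (g := fun r : Ioi (0:ℝ) => (r:ℝ) ^ (q+2) * Real.exp (-(r:ℝ) ^ 2)),
        integral_volumeIoiPow 2 (fun r => r ^ (q+2) * Real.exp (-r ^ 2))]
      have : ∫ r in Ioi (0:ℝ), r ^ 2 * (r ^ (q+2) * Real.exp (-r ^ 2))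
          = ∫ r in Ioi (0:ℝ), r ^ (q+4) * Real.exp (-r ^ 2) := by
        refine setIntegral_congr_fun measurableSet_Ioi (fun x hx => ?_)
        ring
      rw [this, radial_int (q+4)]
      push_cast
      ring_nf
      rw [hI]
      ring
    · rintro ⟨x, hx⟩
      have hx0 : x ≠ 0 := hx
      have hn : ‖x‖ ≠ 0 := norm_ne_zero_iff.mpr hx0
      simp only [coordFn, homeomorphUnitSphereProd_apply_fst_coe,
        homeomorphUnitSphereProd_apply_snd_coe, PiLp.smul_apply, smul_eq_mul, hFdef]
      rw [mul_pow, mul_pow, inv_pow, inv_pow]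
      field_simp
      ring
  -- Fubini side
  have hfub : ∫ x : E3, F x
      = Real.Gamma (3/2) * Real.Gamma (((q:ℝ)+1)/2) * Real.Gamma (1/2) := by
    rw [← ((EuclideanSpace.volume_preserving_symm_measurableEquiv_toLp (Fin 3)).symm).integral_comp
        (MeasurableEquiv.measurableEmbedding _) F, MeasurableEquiv.symm_symm]
    have hpt : ∀ y : Fin 3 → ℝ,
        F (MeasurableEquiv.toLp 2 (Fin 3 → ℝ) y)
          = ∏ k, (y k) ^ (if k = i then 2 else if k = j then q else 0)
              * Real.exp (-(y k) ^ 2) := by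
      intro y
      have hcoord : ∀ k, (MeasurableEquiv.toLp 2 (Fin 3 → ℝ) y : E3) k = y k := by
        intro k
        rfl
      have hnorm : ‖(MeasurableEquiv.toLp 2 (Fin 3 → ℝ) y : E3)‖ ^ 2
          = ∑ k, (y k) ^ 2 := by
        rw [EuclideanSpace.norm_eq, Real.sq_sqrt (by positivity)]
        refine Finset.sum_congr rfl fun k _ => ?_
        rw [hcoord, Real.norm_eq_abs, sq_abs]
      simp only [hFdef, hcoord, hnorm]
      rw [Finset.prod_mul_distrib, ← Real.exp_sum, prod_pow_e i j hij q y,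
        ← Finset.sum_neg_distrib]
    rw [integral_congr_ae (Filter.Eventually.of_forall hpt),
      integral_fintype_prod_volume_eq_prod
        (fun k t => t ^ (if k = i then 2 else if k = j then q else 0) * Real.exp (-t ^ 2)),
      ← prod_gamma_e i j hij q]
    refine Finset.prod_congr rfl fun k _ => gauss_moment _ ?_
    split_ifs <;> first | decide | exact heq
  -- Gamma values
  have hG2 : Real.Gamma ((1:ℝ)/2) = Real.sqrt π := Real.Gamma_one_half_eq
  have hG3 : Real.Gamma ((3:ℝ)/2) = Real.sqrt π / 2 := by
    rw [show (3:ℝ)/2 = 1/2 + 1 by norm_num, Real.Gamma_add_one (by norm_num), hG2]; ring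
  have hq1 : ((q:ℝ)+1)/2 ≠ 0 := by positivity
  have hq3 : ((q:ℝ)+3)/2 ≠ 0 := by positivity
  have hG5 : Real.Gamma (((q:ℝ)+5)/2)
      = (((q:ℝ)+3)/2) * ((((q:ℝ)+1)/2) * Real.Gamma (((q:ℝ)+1)/2)) := by
    rw [show ((q:ℝ)+5)/2 = ((q:ℝ)+3)/2 + 1 by ring, Real.Gamma_add_one hq3,
      show ((q:ℝ)+3)/2 = ((q:ℝ)+1)/2 + 1 by ring, Real.Gamma_add_one hq1]
  have hGpos : 0 < Real.Gamma (((q:ℝ)+1)/2) := Real.Gamma_pos_of_pos (by positivity)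
  have hππ : Real.sqrt π * Real.sqrt π = π := Real.mul_self_sqrt Real.pi_pos.le
  have hEq : I * ((1/2) * ((((q:ℝ)+3)/2) * ((((q:ℝ)+1)/2) * Real.Gamma (((q:ℝ)+1)/2))))
      = (Real.sqrt π / 2) * Real.Gamma (((q:ℝ)+1)/2) * Real.sqrt π := by
    rw [← hG5, ← hpolar, hfub, hG3, hG2]
  have h1 : I * (((q:ℝ)+3) * ((q:ℝ)+1)) = 4 * π := by
    refine mul_right_cancel₀ hGpos.ne' ?_
    linear_combination 8 * hEq + 4 * Real.Gamma (((q:ℝ)+1)/2) * hππ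
  rw [eq_div_iff (by positivity)]
  exact h1
end
end

section
/- For distinct indices i ≠ j, even integers p ≥ 4 and positive even q, ∫_{S²} (x^i)^p (x^j)^q dμ = [(p−1)(p−3)⋯3 / ((q+1)(q+3)⋯(q+p−3))] · 4π / ((q+p−1)(q+p+1)). -/
open MeasureTheory RealInnerProductSpace

noncomputable section

open Real Set

/-- `∏_{k<m} (k + 1/2)`. -/
noncomputable def Phalf (m : ℕ) : ℝ := ∏ k ∈ Finset.range m, ((k : ℝ) + 1/2)

lemma Phalf_pos (m : ℕ) : 0 < Phalf m :=
  Finset.prod_pos (fun k _ => by positivity)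

/-- Gamma at half-integers. -/
lemma gammaHalf (m : ℕ) : Real.Gamma ((m : ℝ) + 1/2) = Phalf m * Real.sqrt π := by
  induction m with
  | zero => simpa [Phalf] using Real.Gamma_one_half_eq
  | succ n ih =>
      have h : ((n : ℝ) + 1) + 1/2 = ((n : ℝ) + 1/2) + 1 := by ring
      rw [Nat.cast_succ, h, Real.Gamma_add_one (by positivity), ih]
      simp only [Phalf, Finset.prod_range_succ]
      ring

lemma ioiMoment (n : ℕ) : ∫ r in Ioi (0:ℝ), r ^ n * Real.exp (-r^2)
    = (1/2) * Real.Gamma (((n:ℝ)+1)/2) := by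
  have hq : (-1 : ℝ) < n := by
    have : (0:ℝ) ≤ n := Nat.cast_nonneg n
    linarith
  have := integral_rpow_mul_exp_neg_rpow (p := 2) (q := n) (by norm_num) hq
  rw [← this]
  refine setIntegral_congr_fun measurableSet_Ioi (fun x hx => ?_)
  rw [Real.rpow_natCast, Real.rpow_two]

lemma lineMoment (n : ℕ) (hn : Even n) : ∫ x : ℝ, x ^ n * Real.exp (-x^2)
    = Real.Gamma (((n:ℝ)+1)/2) := by
  have h1 : (fun x : ℝ => x ^ n * Real.exp (-x^2))
      = fun x : ℝ => |x| ^ n * Real.exp (-|x|^2) := by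
    funext x; rw [hn.pow_abs, sq_abs]
  rw [h1, integral_comp_abs (f := fun x => x ^ n * Real.exp (-x^2)), ioiMoment]
  ring

lemma gaussE3 (i j : Fin 3) (hij : i ≠ j) (p q : ℕ) (hep : Even p) (heq : Even q) :
    ∫ x : E3, (x i)^p * (x j)^q * Real.exp (-‖x‖^2)
      = Real.Gamma (((p:ℝ)+1)/2) * Real.Gamma (((q:ℝ)+1)/2) * Real.sqrt π := by
  classical
  set E : Fin 3 → ℕ := fun k => if k = i then p else if k = j then q else 0 with hE
  have hnorm : ∀ x : E3, ‖x‖^2 = ∑ k, (x k)^2 := fun x => by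
    rw [EuclideanSpace.norm_eq, Real.sq_sqrt (by positivity)]; simp [sq_abs]
  have key : ∀ x : E3, (x i)^p * (x j)^q * Real.exp (-‖x‖^2)
      = ∏ k, ((x k)^(E k) * Real.exp (-(x k)^2)) := by
    intro x
    rw [Finset.prod_mul_distrib]
    have h1 : ∏ k, (x k)^(E k) = (x i)^p * (x j)^q := by
      fin_cases i <;> fin_cases j <;> simp_all [Fin.prod_univ_three, hE] <;> ring
    have h2 : ∏ k, Real.exp (-(x k)^2) = Real.exp (-‖x‖^2) := by
      rw [← Real.exp_sum, hnorm, ← Finset.sum_neg_distrib]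
    rw [h1, h2]
  calc ∫ x : E3, (x i)^p * (x j)^q * Real.exp (-‖x‖^2)
      = ∫ x : E3, ∏ k, ((x k)^(E k) * Real.exp (-(x k)^2)) := by simp_rw [key]
    _ = ∫ y : Fin 3 → ℝ, ∏ k, ((y k)^(E k) * Real.exp (-(y k)^2)) := by
        exact (EuclideanSpace.volume_preserving_symm_measurableEquiv_toLp (Fin 3)).integral_comp
          (MeasurableEquiv.toLp 2 (Fin 3 → ℝ)).symm.measurableEmbedding
          (fun y : Fin 3 → ℝ => ∏ k, ((y k)^(E k) * Real.exp (-(y k)^2)))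
    _ = ∏ k, ∫ t : ℝ, t^(E k) * Real.exp (-t^2) :=
        MeasureTheory.integral_fintype_prod_eq_prod (ι := Fin 3)
          (fun k t => t^(E k) * Real.exp (-t^2))
    _ = Real.Gamma (((p:ℝ)+1)/2) * Real.Gamma (((q:ℝ)+1)/2) * Real.sqrt π := by
        have h0 : ∫ t : ℝ, t^(0:ℕ) * Real.exp (-t^2) = Real.sqrt π := by
          rw [lineMoment 0 Even.zero]
          norm_num [Real.Gamma_one_half_eq]
        fin_cases i <;> fin_cases j <;>
          simp_all [Fin.prod_univ_three, hE, lineMoment p hep, lineMoment q heq] <;>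
          (try ring) <;> simp

lemma volumeIoiPow_integral (n m : ℕ) :
    ∫ r : Ioi (0:ℝ), (r:ℝ)^m * Real.exp (-(r:ℝ)^2) ∂(Measure.volumeIoiPow n)
      = ∫ r in Ioi (0:ℝ), r^(m+n) * Real.exp (-r^2) := by
  rw [Measure.volumeIoiPow]
  simp only [ENNReal.ofReal]
  rw [integral_withDensity_eq_integral_smul
    ((measurable_subtype_coe.pow_const _).real_toNNReal)
    (fun r : Ioi (0:ℝ) => (r:ℝ)^m * Real.exp (-(r:ℝ)^2)),
    integral_subtype_comap measurableSet_Ioi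
      (fun a : ℝ => Real.toNNReal (a ^ n) • (a ^ m * Real.exp (-a^2)))]
  refine setIntegral_congr_fun measurableSet_Ioi (fun x hx => ?_)
  rw [NNReal.smul_def, Real.coe_toNNReal _ (pow_nonneg hx.out.le _), smul_eq_mul]
  ring

lemma polarFactor (i j : Fin 3) (p q : ℕ) :
    ∫ x : E3, (x i)^p * (x j)^q * Real.exp (-‖x‖^2)
      = (∫ ω : S2, ((ω:E3) i)^p * ((ω:E3) j)^q ∂(volume : Measure E3).toSphere)
        * ∫ r in Ioi (0:ℝ), r^(p+q+2) * Real.exp (-r^2) := by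
  have h3 : Module.finrank ℝ E3 = 3 := finrank_euclideanSpace_fin
  set A : S2 → ℝ := fun ω => ((ω:E3) i)^p * ((ω:E3) j)^q with hA
  set B : Ioi (0:ℝ) → ℝ := fun r => (r:ℝ)^(p+q) * Real.exp (-(r:ℝ)^2) with hB
  calc ∫ x : E3, (x i)^p * (x j)^q * Real.exp (-‖x‖^2)
      = ∫ x : ({(0:E3)}ᶜ : Set E3), ((x:E3) i)^p * ((x:E3) j)^q * Real.exp (-‖(x:E3)‖^2)
          ∂((volume : Measure E3).comap (↑)) := by
        rw [integral_subtype_comap (measurableSet_singleton (0:E3)).compl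
          (fun x : E3 => (x i)^p * (x j)^q * Real.exp (-‖x‖^2)),
          restrict_compl_singleton]
    _ = ∫ y : S2 × Ioi (0:ℝ), A y.1 * B y.2
          ∂((volume : Measure E3).toSphere.prod (Measure.volumeIoiPow 2)) := by
        have hmp := (volume : Measure E3).measurePreserving_homeomorphUnitSphereProd
        rw [h3] at hmp
        rw [← hmp.integral_comp (Homeomorph.measurableEmbedding _)
          (fun y : S2 × Ioi (0:ℝ) => A y.1 * B y.2)]
        refine integral_congr_ae (.of_forall fun x => ?_)
        have hx0 : (x : E3) ≠ 0 := x.2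
        have hn : ‖(x:E3)‖ ≠ 0 := norm_ne_zero_iff.2 hx0
        simp only [homeomorphUnitSphereProd, Homeomorph.homeomorph_mk_coe, Equiv.coe_fn_mk,
          hA, hB]
        simp only [homeomorphSphereProd_apply_fst_coe, homeomorphSphereProd_apply_snd_coe,
          PiLp.smul_apply, smul_eq_mul, one_mul, div_one]
        rw [pow_add]
        field_simp
        have hp' : ‖(x:E3)‖ ^ p * ‖(x:E3)‖⁻¹ ^ p = 1 := by
          rw [← mul_pow, mul_inv_cancel₀ hn, one_pow]
        have hq' : ‖(x:E3)‖ ^ q * ‖(x:E3)‖⁻¹ ^ q = 1 := by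
          rw [← mul_pow, mul_inv_cancel₀ hn, one_pow]
        linear_combination (-((x:E3) i ^ p * (x:E3) j ^ q)) * hp'
          + (-((x:E3) i ^ p * (x:E3) j ^ q * (‖(x:E3)‖ ^ p * ‖(x:E3)‖⁻¹ ^ p))) * hq'
    _ = (∫ ω : S2, A ω ∂(volume : Measure E3).toSphere)
        * ∫ r : Ioi (0:ℝ), B r ∂(Measure.volumeIoiPow 2) := integral_prod_mul A B
    _ = _ := by rw [volumeIoiPow_integral 2 (p+q), hA]

lemma prodN (c : ℕ) :
    ∏ k ∈ Finset.range (c+1), (2*(c:ℝ) + 3 - 2*(k:ℝ)) = 2^(c+2) * Phalf (c+2) := by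
  have h1 : ∏ k ∈ Finset.range (c+1), (2*(c:ℝ) + 3 - 2*(k:ℝ))
      = ∏ k ∈ Finset.range (c+1), (2*(k:ℝ) + 3) := by
    rw [← Finset.prod_range_reflect (fun k => 2*(k:ℝ) + 3) (c+1)]
    refine Finset.prod_congr rfl (fun k hk => ?_)
    have hk' : k ≤ c := Nat.lt_succ_iff.mp (Finset.mem_range.mp hk)
    have : (c + 1 - 1 - k : ℕ) = c - k := by omega
    rw [this, Nat.cast_sub hk']
    ring
  have h2 : Phalf (c+2) = (∏ k ∈ Finset.range (c+1), (((k:ℝ)+1) + 1/2)) * (((0:ℕ):ℝ) + 1/2) := by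
    rw [Phalf, Finset.prod_range_succ']
    congr 1
    exact Finset.prod_congr rfl (fun k _ => by push_cast; ring)
  have h3 : ∏ k ∈ Finset.range (c+1), (2*(k:ℝ) + 3)
      = ∏ k ∈ Finset.range (c+1), (2 * (((k:ℝ) + 1) + 1/2)) :=
    Finset.prod_congr rfl (fun k _ => by ring)
  rw [h1, h2, h3, Finset.prod_mul_distrib, Finset.prod_const, Finset.card_range]
  push_cast
  ring

lemma prodD (c d : ℕ) :
    ∏ k ∈ Finset.range (c+1), (2*(d:ℝ) + 3 + 2*(k:ℝ))
      = 2^(c+1) * ∏ k ∈ Finset.range (c+1), ((d:ℝ) + 1 + (k:ℝ) + 1/2) := by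
  have h2 : ∏ k ∈ Finset.range (c+1), (2*(d:ℝ) + 3 + 2*(k:ℝ))
      = ∏ k ∈ Finset.range (c+1), (2 * ((d:ℝ) + 1 + (k:ℝ) + 1/2)) :=
    Finset.prod_congr rfl (fun k _ => by ring)
  rw [h2, Finset.prod_mul_distrib, Finset.prod_const, Finset.card_range]

lemma prodP_split (c d : ℕ) :
    Phalf (c + d + 4) = Phalf (d+1)
      * (∏ k ∈ Finset.range (c+1), ((d:ℝ) + 1 + (k:ℝ) + 1/2))
      * ((d:ℝ) + 1 + ((c:ℝ)+1) + 1/2) * ((d:ℝ) + 1 + ((c:ℝ)+2) + 1/2) := by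
  have hn : c + d + 4 = (d+1) + (c+3) := by omega
  have key : ∏ x ∈ Finset.range (c+3), ((d:ℝ) + 1 + (x:ℝ) + 1/2)
      = (∏ x ∈ Finset.range (c+1), ((d:ℝ)+1+(x:ℝ)+1/2)) * ((d:ℝ)+1+((c:ℝ)+1)+1/2)
        * ((d:ℝ)+1+((c:ℝ)+2)+1/2) := by
    rw [show c+3 = (c+1)+1+1 by omega, Finset.prod_range_succ, Finset.prod_range_succ]
    push_cast; ring
  rw [Phalf, hn, Finset.prod_range_add,
    Finset.prod_congr rfl (fun x (_ : x ∈ Finset.range (c+3)) =>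
      (by push_cast; ring : ((((d+1) + x : ℕ)):ℝ) + 1/2 = (d:ℝ) + 1 + (x:ℝ) + 1/2)),
    key, Phalf]
  ring

/-- For `i ≠ j`, even `p ≥ 4` and positive even `q`,
`∫_{S²} (xⁱ)^p (xʲ)^q dμ = [(p-1)(p-3)⋯3 / ((q+1)(q+3)⋯(q+p-3))] · 4π/((q+p-1)(q+p+1))`. -/
theorem sphere_integral_pow_pow (i j : Fin 3) (hij : i ≠ j) (p q : ℕ)
    (hp : 4 ≤ p) (hep : Even p) (hq : 0 < q) (heq : Even q) :
    ∫ z : S2, (coordFn i z) ^ p * (coordFn j z) ^ q ∂sphereMeasure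
      = ((∏ k ∈ Finset.range ((p - 2) / 2), ((p : ℝ) - 1 - 2 * (k : ℝ)))
          / (∏ k ∈ Finset.range ((p - 2) / 2), ((q : ℝ) + 1 + 2 * (k : ℝ))))
        * (4 * Real.pi / (((q : ℝ) + p - 1) * ((q : ℝ) + p + 1))) := by
  obtain ⟨c, rfl⟩ : ∃ c, p = 2*c+4 := ⟨(p-4)/2, by obtain ⟨a, ha⟩ := hep; omega⟩
  obtain ⟨d, rfl⟩ : ∃ d, q = 2*d+2 := ⟨(q-2)/2, by obtain ⟨b, hb⟩ := heq; omega⟩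
  set P : ℕ := 2*c+4
  set Q : ℕ := 2*d+2
  -- the sphere integral
  set S : ℝ := ∫ z : S2, (coordFn i z) ^ P * (coordFn j z) ^ Q ∂sphereMeasure with hSdef
  have hS' : (∫ ω : S2, ((ω:E3) i)^P * ((ω:E3) j)^Q ∂(volume : Measure E3).toSphere) = S := by
    rw [hSdef]; rfl
  -- main identity from the Gaussian integral
  have hmain : S * ((1/2) * Real.Gamma ((((P+Q+2 : ℕ) : ℝ)+1)/2))
      = Real.Gamma (((P:ℝ)+1)/2) * Real.Gamma (((Q:ℝ)+1)/2) * Real.sqrt π := by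
    rw [← gaussE3 i j hij P Q ⟨c+2, by simp [P]; ring⟩ ⟨d+1, by simp [Q]; ring⟩,
      polarFactor i j P Q, hS', ioiMoment (P+Q+2)]
  -- rewrite the Gammas through `Phalf`
  have e1 : (((P : ℕ) : ℝ)+1)/2 = ((c+2 : ℕ):ℝ) + 1/2 := by simp [P]; push_cast; ring
  have e2 : (((Q : ℕ) : ℝ)+1)/2 = ((d+1 : ℕ):ℝ) + 1/2 := by simp [Q]; push_cast; ring
  have e3 : (((P+Q+2 : ℕ) : ℝ)+1)/2 = ((c+d+4 : ℕ):ℝ) + 1/2 := by simp [P, Q]; push_cast; ring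
  rw [e1, e2, e3, gammaHalf, gammaHalf, gammaHalf] at hmain
  -- solve for S
  have hsπ : (0:ℝ) < Real.sqrt π := Real.sqrt_pos.mpr Real.pi_pos
  have hM : ((1/2) * (Phalf (c+d+4) * Real.sqrt π)) ≠ 0 := by
    have := Phalf_pos (c+d+4); positivity
  have hSval : S = Phalf (c+2) * Real.sqrt π * (Phalf (d+1) * Real.sqrt π) * Real.sqrt π
      / ((1/2) * (Phalf (c+d+4) * Real.sqrt π)) := (eq_div_iff hM).mpr hmain
  -- compute the index and target products
  have hidx : (P - 2) / 2 = c + 1 := by omega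
  have hNgoal : ∏ k ∈ Finset.range (c+1), ((P : ℝ) - 1 - 2 * (k : ℝ))
      = 2^(c+2) * Phalf (c+2) := by
    rw [← prodN c]
    refine Finset.prod_congr rfl (fun k _ => by simp [P]; push_cast; ring)
  have hDgoal : ∏ k ∈ Finset.range (c+1), ((Q : ℝ) + 1 + 2 * (k : ℝ))
      = 2^(c+1) * ∏ k ∈ Finset.range (c+1), ((d:ℝ) + 1 + (k:ℝ) + 1/2) := by
    rw [← prodD c d]
    refine Finset.prod_congr rfl (fun k _ => by simp [Q]; push_cast; ring)
  have hQpos : (0:ℝ) < ∏ k ∈ Finset.range (c+1), ((d:ℝ) + 1 + (k:ℝ) + 1/2) :=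
    Finset.prod_pos (fun k _ => by positivity)
  have hcast1 : ((Q:ℝ) + (P:ℝ) - 1) = 2*(c:ℝ) + 2*(d:ℝ) + 5 := by simp [P, Q]; push_cast; ring
  have hcast2 : ((Q:ℝ) + (P:ℝ) + 1) = 2*(c:ℝ) + 2*(d:ℝ) + 7 := by simp [P, Q]; push_cast; ring
  rw [hidx, hNgoal, hDgoal, hcast1, hcast2, hSval, prodP_split c d]
  have h1 := Phalf_pos (c+2)
  have h2 := Phalf_pos (d+1)
  have h5 : (0:ℝ) < 2*(c:ℝ) + 2*(d:ℝ) + 5 := by positivity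
  have h7 : (0:ℝ) < 2*(c:ℝ) + 2*(d:ℝ) + 7 := by positivity
  set s : ℝ := Real.sqrt π with hs
  have hπ : Real.pi = s * s := (Real.mul_self_sqrt Real.pi_pos.le).symm
  rw [hπ]
  have hs0 : s ≠ 0 := ne_of_gt hsπ
  field_simp
  ring
end
end

section
/- Let A ∈ C²(S²) and consider the hypersurface t = A(u) (independent of r) in Minkowski space, with induced metric g_{ij} = δ_{ij} − f_i f_j where f(x) = A(x/|x|). Then the BORT center of mass integral converges and equals C^i = −(1/8π) ∫_{S²} |∇̃A|² x^i dμ, where ∇̃ is the gradient on S². -/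
open MeasureTheory RealInnerProductSpace

noncomputable section

/-- Partial derivative `∂_i f` on `ℝ³`. -/
def pd (f : E3 → ℝ) (i : Fin 3) (x : E3) : ℝ := fderiv ℝ f x (e3 i)

/-- Second partial derivative `∂_i ∂_j f` on `ℝ³`. -/
def pd2 (f : E3 → ℝ) (i j : Fin 3) (x : E3) : ℝ := iteratedFDeriv ℝ 2 f x ![e3 i, e3 j]

/-- The induced metric of the graph `t = f` in Minkowski space, as a function of `x`. -/
def gmet (f : E3 → ℝ) (x : E3) (j k : Fin 3) : ℝ :=
  (if j = k then (1 : ℝ) else 0) - pd f j x * pd f k x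


/-! ### Auxiliary lemmas -/

lemma norm_inv_smul_eq_aux (c : ℝ) (hc : 0 < c) (x : E3) :
    ‖c • x‖⁻¹ • (c • x) = ‖x‖⁻¹ • x := by
  by_cases hx : x = 0
  · simp [hx]
  · rw [norm_smul, Real.norm_eq_abs, abs_of_pos hc, smul_smul, mul_inv]
    congr 1
    ring_nf
    rw [mul_inv_cancel₀ hc.ne', one_mul]

lemma homExt_smul (A : S2 → ℝ) (c : ℝ) (hc : 0 < c) (x : E3) :
    homExt A (c • x) = homExt A x := by
  unfold homExt
  rw [norm_inv_smul_eq_aux c hc x]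

/-- If `h (c • y) = k * h y` away from `0` then `fderiv h (c•x) v = (k/c) * fderiv h x v`. -/
lemma fderiv_scale {h : E3 → ℝ} {c k : ℝ} (hc : 0 < c) {x : E3} (hx : x ≠ 0)
    (hdx : DifferentiableAt ℝ h x) (hdcx : DifferentiableAt ℝ h (c • x))
    (heq : ∀ y : E3, y ≠ 0 → h (c • y) = k * h y) (v : E3) :
    fderiv ℝ h (c • x) v = (k / c) * fderiv ℝ h x v := by
  have hsmul : HasFDerivAt (fun y : E3 => c • y) (c • ContinuousLinearMap.id ℝ E3) x := by
    exact (hasFDerivAt_id x).const_smul c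
  have hcomp : HasFDerivAt (fun y => h (c • y))
      ((fderiv ℝ h (c • x)).comp (c • ContinuousLinearMap.id ℝ E3)) x :=
    hdcx.hasFDerivAt.comp x hsmul
  have heq' : (fun y => h (c • y)) =ᶠ[nhds x] (fun y => k * h y) := by
    filter_upwards [isOpen_compl_singleton.mem_nhds hx] with y hy
    exact heq y hy
  have h2 : HasFDerivAt (fun y => k * h y)
      ((fderiv ℝ h (c • x)).comp (c • ContinuousLinearMap.id ℝ E3)) x :=
    hcomp.congr_of_eventuallyEq heq'.symm
  have h3 : HasFDerivAt (fun y => k * h y) (k • fderiv ℝ h x) x := by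
    simpa using hdx.hasFDerivAt.const_mul k
  have := h2.unique h3
  have hv := congrArg (fun L : E3 →L[ℝ] ℝ => L v) this
  simp only [ContinuousLinearMap.comp_apply, ContinuousLinearMap.smul_apply,
    ContinuousLinearMap.id_apply, _root_.map_smul, smul_eq_mul] at hv
  field_simp at hv ⊢
  linarith [hv]

lemma sum_smul_e3 (v : E3) : ∑ j, v j • e3 j = v := by
  ext j
  simp [e3, EuclideanSpace.single_apply, Pi.single_apply]

lemma clm_apply_eq_sum (L : E3 →L[ℝ] ℝ) (v : E3) : L v = ∑ j, v j * L (e3 j) := by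
  conv_lhs => rw [← sum_smul_e3 v]
  rw [map_sum]
  simp [smul_eq_mul]

section Main
variable {A : S2 → ℝ} (hA : ContDiffOn ℝ 2 (homExt A) {(0 : E3)}ᶜ)
include hA

lemma contDiffAt_f {x : E3} (hx : x ≠ 0) : ContDiffAt ℝ 2 (homExt A) x :=
  hA.contDiffAt (isOpen_compl_singleton.mem_nhds hx)

lemma diffAt_f {x : E3} (hx : x ≠ 0) : DifferentiableAt ℝ (homExt A) x :=
  (contDiffAt_f hA hx).differentiableAt (by norm_num)

lemma contDiffAt_fderiv {x : E3} (hx : x ≠ 0) :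
    ContDiffAt ℝ 1 (fderiv ℝ (homExt A)) x := by
  exact (contDiffAt_f hA hx).fderiv_right (by norm_num)

lemma diffAt_pd {x : E3} (hx : x ≠ 0) (j : Fin 3) :
    DifferentiableAt ℝ (pd (homExt A) j) x := by
  have : pd (homExt A) j = (fun L : E3 →L[ℝ] ℝ => L (e3 j)) ∘ fderiv ℝ (homExt A) := rfl
  rw [this]
  exact ((ContinuousLinearMap.apply ℝ ℝ (e3 j)).differentiableAt).comp x
    ((contDiffAt_fderiv hA hx).differentiableAt one_ne_zero)

lemma fderiv_pd {x : E3} (hx : x ≠ 0) (j k : Fin 3) :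
    fderiv ℝ (pd (homExt A) j) x (e3 k) = pd2 (homExt A) k j x := by
  have h1 : fderiv ℝ (pd (homExt A) j) x
      = (ContinuousLinearMap.apply ℝ ℝ (e3 j)).comp (fderiv ℝ (fderiv ℝ (homExt A)) x) := by
    have := (ContinuousLinearMap.apply ℝ ℝ (e3 j)).fderiv (x := fderiv ℝ (homExt A) x)
    rw [show pd (homExt A) j
        = (ContinuousLinearMap.apply ℝ ℝ (e3 j)) ∘ fderiv ℝ (homExt A) from rfl]
    rw [fderiv_comp x ((ContinuousLinearMap.apply ℝ ℝ (e3 j)).differentiableAt)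
      ((contDiffAt_fderiv hA hx).differentiableAt one_ne_zero), this]
  rw [h1, pd2, iteratedFDeriv_two_apply]
  rfl

lemma pd2_symm {x : E3} (hx : x ≠ 0) (j k : Fin 3) :
    pd2 (homExt A) j k x = pd2 (homExt A) k j x := by
  have h := (contDiffAt_f hA hx).isSymmSndFDerivAt (n := 2) (by norm_num)
  simp only [pd2, iteratedFDeriv_two_apply]
  exact h (e3 j) (e3 k)

lemma pd_scale {c : ℝ} (hc : 0 < c) {x : E3} (hx : x ≠ 0) (j : Fin 3) :
    pd (homExt A) j (c • x) = c⁻¹ * pd (homExt A) j x := by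
  have h := fderiv_scale (h := homExt A) (k := 1) hc hx (diffAt_f hA hx)
    (diffAt_f hA (smul_ne_zero hc.ne' hx))
    (fun y _ => (homExt_smul A c hc y).trans (one_mul _).symm) (e3 j)
  simpa [pd, one_div] using h

lemma pd_gmet_formula {x : E3} (hx : x ≠ 0) (j k m : Fin 3) :
    pd (fun y => gmet (homExt A) y j k) m x
      = -(pd2 (homExt A) m j x * pd (homExt A) k x
          + pd (homExt A) j x * pd2 (homExt A) m k x) := by
  have hdj := diffAt_pd hA hx j
  have hdk := diffAt_pd hA hx k
  show fderiv ℝ (fun y => (if j = k then (1:ℝ) else 0)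
    - pd (homExt A) j y * pd (homExt A) k y) x (e3 m) = _
  rw [fderiv_const_sub, fderiv_fun_mul hdj hdk]
  simp only [ContinuousLinearMap.neg_apply, ContinuousLinearMap.add_apply,
    ContinuousLinearMap.smul_apply, smul_eq_mul, fderiv_pd hA hx j m, fderiv_pd hA hx k m]
  ring

lemma pd_gmet_scale {c : ℝ} (hc : 0 < c) {x : E3} (hx : x ≠ 0) (j k m : Fin 3) :
    pd (fun y => gmet (homExt A) y j k) m (c • x)
      = (c⁻¹ ^ 2 / c) * pd (fun y => gmet (homExt A) y j k) m x := by
  have hdiffP : ∀ z : E3, z ≠ 0 →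
      DifferentiableAt ℝ (fun y => pd (homExt A) j y * pd (homExt A) k y) z :=
    fun z hz => (diffAt_pd hA hz j).mul (diffAt_pd hA hz k)
  have hPscale : ∀ y : E3, y ≠ 0 →
      (fun y => pd (homExt A) j y * pd (homExt A) k y) (c • y)
        = c⁻¹ ^ 2 * (fun y => pd (homExt A) j y * pd (homExt A) k y) y := by
    intro y hy
    simp only [pd_scale hA hc hy]
    ring
  have hP := fderiv_scale (h := fun y => pd (homExt A) j y * pd (homExt A) k y)
    (k := c⁻¹ ^ 2) hc hx (hdiffP x hx) (hdiffP _ (smul_ne_zero hc.ne' hx)) hPscale (e3 m)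
  have hneg : ∀ z : E3, pd (fun y => gmet (homExt A) y j k) m z
      = -(fderiv ℝ (fun y => pd (homExt A) j y * pd (homExt A) k y) z (e3 m)) := by
    intro z
    show fderiv ℝ (fun y => (if j = k then (1:ℝ) else 0)
      - pd (homExt A) j y * pd (homExt A) k y) z (e3 m) = _
    rw [fderiv_const_sub]
    simp
  rw [hneg, hneg, hP]
  ring

lemma gmet_scale {c : ℝ} (hc : 0 < c) {x : E3} (hx : x ≠ 0) (j k : Fin 3) :
    gmet (homExt A) (c • x) j k
      = (if j = k then (1:ℝ) else 0) - c⁻¹ ^ 2 * (pd (homExt A) j x * pd (homExt A) k x) := by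
  simp only [gmet, pd_scale hA hc hx]
  ring

lemma euler0 {x : E3} (hx : x ≠ 0) : fderiv ℝ (homExt A) x x = 0 := by
  have h1 : HasDerivAt (fun t : ℝ => t • x) x 1 := by
    simpa using (hasDerivAt_id (1:ℝ)).smul_const x
  have hfd : HasFDerivAt (homExt A) (fderiv ℝ (homExt A) x) ((1:ℝ) • x) := by
    rw [one_smul]; exact (diffAt_f hA hx).hasFDerivAt
  have h2 : HasDerivAt (fun t : ℝ => homExt A (t • x)) (fderiv ℝ (homExt A) x x) 1 :=
    by have := hfd.comp_hasDerivAt 1 h1; exact this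
  have hev : (fun t : ℝ => homExt A (t • x)) =ᶠ[nhds 1] fun _ => homExt A x := by
    filter_upwards [Ioi_mem_nhds (show (0:ℝ) < 1 by norm_num)] with t ht
    exact homExt_smul A t ht x
  exact (h2.congr_of_eventuallyEq hev.symm).unique (hasDerivAt_const _ _)

lemma euler1 {x : E3} (hx : x ≠ 0) (k : Fin 3) :
    fderiv ℝ (pd (homExt A) k) x x = -(pd (homExt A) k x) := by
  have h1 : HasDerivAt (fun t : ℝ => t • x) x 1 := by
    simpa using (hasDerivAt_id (1:ℝ)).smul_const x
  have hfd : HasFDerivAt (pd (homExt A) k) (fderiv ℝ (pd (homExt A) k) x) ((1:ℝ) • x) := by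
    rw [one_smul]; exact (diffAt_pd hA hx k).hasFDerivAt
  have h2 : HasDerivAt (fun t : ℝ => pd (homExt A) k (t • x))
      (fderiv ℝ (pd (homExt A) k) x x) 1 := by
    have := hfd.comp_hasDerivAt 1 h1; exact this
  have hev : (fun t : ℝ => pd (homExt A) k (t • x))
      =ᶠ[nhds 1] fun t : ℝ => t⁻¹ * pd (homExt A) k x := by
    filter_upwards [Ioi_mem_nhds (show (0:ℝ) < 1 by norm_num)] with t ht
    exact pd_scale hA ht hx k
  have h3 : HasDerivAt (fun t : ℝ => t⁻¹ * pd (homExt A) k x)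
      (-(pd (homExt A) k x)) 1 := by
    simpa using (hasDerivAt_inv (one_ne_zero)).mul_const (pd (homExt A) k x)
  exact (h2.congr_of_eventuallyEq hev.symm).unique h3

lemma euler0_sum {x : E3} (hx : x ≠ 0) :
    ∑ j, x j * pd (homExt A) j x = 0 := by
  have := euler0 hA hx
  rwa [clm_apply_eq_sum] at this

lemma euler1_sum {x : E3} (hx : x ≠ 0) (k : Fin 3) :
    ∑ j, x j * pd2 (homExt A) j k x = -(pd (homExt A) k x) := by
  have h := euler1 hA hx k
  rw [clm_apply_eq_sum] at h
  have hc : ∀ j, fderiv ℝ (pd (homExt A) k) x (e3 j) = pd2 (homExt A) j k x :=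
    fun j => fderiv_pd hA hx k j
  simp only [hc] at h
  exact h

end Main

/-- The `r`-free integrand on the sphere. -/
def Jfun (A : S2 → ℝ) (i : Fin 3) (x : E3) : ℝ :=
  x i * ∑ j, (∑ k, (pd (fun y => gmet (homExt A) y j k) k x
      - pd (fun y => gmet (homExt A) y k k) j x)) * x j
    - ∑ k, ((gmet (homExt A) x k i - if k = i then (1 : ℝ) else 0) * x k
      - (gmet (homExt A) x k k - 1) * x i)

section Main2
variable {A : S2 → ℝ} (hA : ContDiffOn ℝ 2 (homExt A) {(0 : E3)}ᶜ)
include hA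

lemma Jfun_eq {x : E3} (hx : x ≠ 0) (i : Fin 3) :
    Jfun A i x = -2 * (∑ k, (pd (homExt A) k x) ^ 2) * x i := by
  have e0 := euler0_sum hA hx
  have e1_0 := euler1_sum hA hx 0
  have e1_1 := euler1_sum hA hx 1
  have e1_2 := euler1_sum hA hx 2
  rw [Fin.sum_univ_three] at e0 e1_0 e1_1 e1_2
  have hin : ∀ j k : Fin 3, pd (fun y => gmet (homExt A) y j k) k x
      - pd (fun y => gmet (homExt A) y k k) j x
      = pd (homExt A) k x * pd2 (homExt A) j k x
        - pd (homExt A) j x * pd2 (homExt A) k k x := by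
    intro j k
    rw [pd_gmet_formula hA hx j k k, pd_gmet_formula hA hx k k j, pd2_symm hA hx k j]
    ring
  simp only [Jfun]
  simp only [hin]
  simp only [gmet, Fin.sum_univ_three]
  norm_num
  linear_combination x i * pd (homExt A) 0 x * e1_0 + x i * pd (homExt A) 1 x * e1_1
    + x i * pd (homExt A) 2 x * e1_2
    - x i * (pd2 (homExt A) 0 0 x + pd2 (homExt A) 1 1 x + pd2 (homExt A) 2 2 x) * e0
    + pd (homExt A) i x * e0

lemma scale_step (ω : S2) {r : ℝ} (hr : 0 < r) (i : Fin 3) :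
    ((r • (ω : E3)) i *
        ∑ j : Fin 3, (∑ k : Fin 3,
            (pd (fun y => gmet (homExt A) y j k) k (r • (ω : E3))
              - pd (fun y => gmet (homExt A) y k k) j (r • (ω : E3))))
          * ((r • (ω : E3)) j / r)
      - ∑ k : Fin 3,
          ((gmet (homExt A) (r • (ω : E3)) k i - if k = i then (1 : ℝ) else 0)
              * ((r • (ω : E3)) k / r)
            - (gmet (homExt A) (r • (ω : E3)) k k - 1) * ((r • (ω : E3)) i / r)))
    = r⁻¹ ^ 2 * Jfun A i (ω : E3) := by
  have hnorm : ‖(ω : E3)‖ = 1 := by simp [mem_sphere_zero_iff_norm.mp ω.2]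
  have hω : (ω : E3) ≠ 0 := by
    intro h; rw [h] at hnorm; simp at hnorm
  simp only [pd_gmet_scale hA hr hω, gmet_scale hA hr hω]
  simp only [Jfun]
  simp only [gmet, PiLp.smul_apply, smul_eq_mul, Fin.sum_univ_three]
  field_simp
  simp only [if_true]
  ring

end Main2

lemma grad_sq (A : S2 → ℝ) (ω : S2) :
    ⟪sphereGrad A ω, sphereGrad A ω⟫
      = ∑ k, (pd (homExt A) k (ω : E3)) ^ 2 := by
  have hg : ∀ v : E3, (inner ℝ (sphereGrad A ω) v : ℝ) = fderiv ℝ (homExt A) (ω : E3) v :=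
    fun v => InnerProductSpace.toDual_symm_apply
  have hcomp : ∀ k : Fin 3, (sphereGrad A ω) k = pd (homExt A) k (ω : E3) := by
    intro k
    rw [pd, ← hg (e3 k)]
    simp [e3, EuclideanSpace.inner_single_right]
  calc (inner ℝ (sphereGrad A ω) (sphereGrad A ω) : ℝ)
      = ∑ k, (sphereGrad A ω) k * (sphereGrad A ω) k := by
        rw [PiLp.inner_apply]; simp [RCLike.inner_apply, sq]
    _ = ∑ k, (pd (homExt A) k (ω : E3)) ^ 2 := by
        simp [hcomp, sq]

/-- The BORT center of mass of the graph `t = A(u)` (independent of `r`) in Minkowski space: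
the flux integrals over the coordinate spheres `{|x| = r}` (written via the parametrization
`x = r ω`, `dσ₀ = r² dμ`) converge as `r → ∞` to
`Cⁱ = -(1/8π) ∫_{S²} |∇̃A|² xⁱ dμ`.  Here `f = homExt A`, i.e. `f(x) = A(x/|x|)`. -/
theorem bort_center_of_mass_graph (A : S2 → ℝ)
    (hA : ContDiffOn ℝ 2 (homExt A) {(0 : E3)}ᶜ) (i : Fin 3) :
    Filter.Tendsto
      (fun r : ℝ =>
        (1 / (16 * Real.pi)) * r ^ 2 *
          ∫ ω : S2,
            ((r • (ω : E3)) i *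
                ∑ j : Fin 3,
                  (∑ k : Fin 3,
                      (pd (fun y => gmet (homExt A) y j k) k (r • (ω : E3))
                        - pd (fun y => gmet (homExt A) y k k) j (r • (ω : E3))))
                    * ((r • (ω : E3)) j / r)
              - ∑ k : Fin 3,
                  ((gmet (homExt A) (r • (ω : E3)) k i - if k = i then (1 : ℝ) else 0)
                      * ((r • (ω : E3)) k / r)
                    - (gmet (homExt A) (r • (ω : E3)) k k - 1) * ((r • (ω : E3)) i / r)))
            ∂sphereMeasure)
      Filter.atTop
      (nhds (-(1 / (8 * Real.pi)) *
        ∫ ω : S2, ⟪sphereGrad A ω, sphereGrad A ω⟫ * coordFn i ω ∂sphereMeasure)) := by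
  set C := -(1 / (8 * Real.pi)) *
      ∫ ω : S2, ⟪sphereGrad A ω, sphereGrad A ω⟫ * coordFn i ω ∂sphereMeasure with hC
  apply Filter.Tendsto.congr' (f₁ := fun _ : ℝ => C) _ tendsto_const_nhds
  filter_upwards [Filter.eventually_ge_atTop (1:ℝ)] with r hr1
  have hr : (0:ℝ) < r := lt_of_lt_of_le one_pos hr1
  have hpt : ∀ ω : S2,
      ((r • (ω : E3)) i *
          ∑ j : Fin 3,
            (∑ k : Fin 3,
                (pd (fun y => gmet (homExt A) y j k) k (r • (ω : E3))
                  - pd (fun y => gmet (homExt A) y k k) j (r • (ω : E3))))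
              * ((r • (ω : E3)) j / r)
        - ∑ k : Fin 3,
            ((gmet (homExt A) (r • (ω : E3)) k i - if k = i then (1 : ℝ) else 0)
                * ((r • (ω : E3)) k / r)
              - (gmet (homExt A) (r • (ω : E3)) k k - 1) * ((r • (ω : E3)) i / r)))
      = (r⁻¹ ^ 2 * (-2))
          * (⟪sphereGrad A ω, sphereGrad A ω⟫ * coordFn i ω) := by
    intro ω
    have hnorm : ‖(ω : E3)‖ = 1 := by simp [mem_sphere_zero_iff_norm.mp ω.2]
    have hω : (ω : E3) ≠ 0 := by
      intro h; rw [h] at hnorm; simp at hnorm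
    rw [scale_step hA ω hr i, Jfun_eq hA hω i, grad_sq A ω]
    show _ = _ * (_ * (ω : E3) i)
    ring
  have hint : (∫ ω : S2,
      ((r • (ω : E3)) i *
          ∑ j : Fin 3,
            (∑ k : Fin 3,
                (pd (fun y => gmet (homExt A) y j k) k (r • (ω : E3))
                  - pd (fun y => gmet (homExt A) y k k) j (r • (ω : E3))))
              * ((r • (ω : E3)) j / r)
        - ∑ k : Fin 3,
            ((gmet (homExt A) (r • (ω : E3)) k i - if k = i then (1 : ℝ) else 0)
                * ((r • (ω : E3)) k / r)
              - (gmet (homExt A) (r • (ω : E3)) k k - 1) * ((r • (ω : E3)) i / r)))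
      ∂sphereMeasure)
      = (r⁻¹ ^ 2 * (-2))
          * ∫ ω : S2, ⟪sphereGrad A ω, sphereGrad A ω⟫ * coordFn i ω ∂sphereMeasure := by
    rw [MeasureTheory.integral_congr_ae (Filter.Eventually.of_forall hpt)]
    exact MeasureTheory.integral_const_mul _ _
  rw [hint, hC]
  have hπ : Real.pi ≠ 0 := Real.pi_ne_zero
  field_simp
  ring
end
end
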